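/- Let R be a Noetherian integral domain of Krull dimension one which contains a field of characteristic zero. If every prime ideal of the polynomial ring R[X] is a set theoretic complete intersection, then R is a Dedekind domain whose ideal class group is a torsion group. -/

import Mathlib

open Polynomial
open scoped nonZeroDivisors

set_option maxHeartbeats 1000000
set_option synthInstance.maxHeartbeats 400000

/-- The height of an ideal: the infimum of the heights (in the prime spectrum)
of the prime ideals containing it. -/
noncomputable def idealHeight {A : Type*} [CommRing A] (I : Ideal A) : ℕ∞ :=
  ⨅ (P : PrimeSpectrum A) (_ : I ≤ P.asIdeal), Order.height P

/-- An ideal `I` of a commutative ring is a set theoretic complete intersection if there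
exist `n` elements, with `n` the height of `I`, such that the radical of `I` equals the
radical of the ideal they generate. -/
def IsSTCI {A : Type*} [CommRing A] (I : Ideal A) : Prop :=
  ∃ n : ℕ, (n : ℕ∞) = idealHeight I ∧
    ∃ a : Fin n → A, I.radical = (Ideal.span (Set.range a)).radical

lemma aux_bot_lt {A : Type*} [CommRing A] [IsDomain A] {p : PrimeSpectrum A}
    (h : p.asIdeal ≠ ⊥) : (⟨⊥, Ideal.bot_prime⟩ : PrimeSpectrum A) < p := by
  rw [← PrimeSpectrum.asIdeal_lt_asIdeal]
  exact Ne.bot_lt' (Ne.symm h)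

lemma aux_idealHeight_eq_one {A : Type*} [CommRing A] [IsDomain A] {Q : Ideal A}
    (hQ : Q.IsPrime) (hQ0 : Q ≠ ⊥)
    (hmin : ∀ P : Ideal A, P.IsPrime → P < Q → P = ⊥) : idealHeight Q = 1 := by
  have hle : idealHeight Q ≤ 1 := by
    refine le_trans (iInf₂_le (⟨Q, hQ⟩ : PrimeSpectrum A) le_rfl) ?_
    refine Order.height_le fun p hp => ?_
    by_contra hlen
    push_neg at hlen
    have h2 : 2 ≤ p.length := by
      rcases Nat.lt_or_ge p.length 2 with h | h
      · exfalso
        apply absurd hlen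
        push_neg
        exact_mod_cast Nat.lt_succ_iff.mp h
      · exact h
    have hω1 : p.length - 1 < p.length + 1 := by omega
    have hω0 : p.length - 2 < p.length + 1 := by omega
    set i1 : Fin (p.length + 1) := ⟨p.length - 1, hω1⟩ with hi1def
    set i0 : Fin (p.length + 1) := ⟨p.length - 2, hω0⟩ with hi0def
    have hmono := p.strictMono
    have hlt1 : p i1 < p.last := by
      apply hmono
      rw [Fin.lt_iff_val_lt_val]
      simp [hi1def, RelSeries.last, Fin.last]
      omega
    have hlt0 : p i0 < p i1 := by
      apply hmono
      rw [Fin.lt_iff_val_lt_val]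
      simp [hi0def, hi1def]
      omega
    rw [hp] at hlt1
    have hbot : (p i1).asIdeal = ⊥ :=
      hmin _ (p i1).isPrime hlt1
    have hcon : (p i0).asIdeal < (⊥ : Ideal A) := hbot ▸ hlt0
    exact not_lt_bot hcon
  have hge : 1 ≤ idealHeight Q := by
    refine le_iInf₂ fun p hp => ?_
    have hlt : (⟨⊥, Ideal.bot_prime⟩ : PrimeSpectrum A) < p :=
      aux_bot_lt (fun h => hQ0 (le_bot_iff.mp (h ▸ hp)))
    rw [ENat.one_le_iff_ne_zero]
    intro h0
    rw [Order.height_eq_zero] at h0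
    exact hlt.not_ge (h0 hlt.le)
  exact le_antisymm hle hge

lemma aux_exists_radical_span_singleton {A : Type*} [CommRing A] {Q : Ideal A}
    (hQ : Q.IsPrime) (hstci : IsSTCI Q) (h1 : idealHeight Q = 1) :
    ∃ f : A, Q = (Ideal.span {f}).radical := by
  obtain ⟨n, hn, a, ha⟩ := hstci
  rw [h1] at hn
  have hn1 : n = 1 := by exact_mod_cast hn
  subst hn1
  refine ⟨a 0, ?_⟩
  have hr : Set.range a = {a 0} := by
    rw [Set.range_unique]
    rfl
  calc Q = Q.radical := hQ.radical.symm
  _ = (Ideal.span (Set.range a)).radical := ha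
  _ = (Ideal.span {a 0}).radical := by rw [hr]

lemma aux_dimLEOne {R : Type*} [CommRing R] [IsDomain R] (hdim : ringKrullDim R = 1) :
    Ring.DimensionLEOne R := by
  constructor
  intro p hp0 hp
  obtain ⟨M, hM, hpM⟩ := p.exists_le_maximal hp.ne_top
  have hpM' : p = M := by
    by_contra hne
    have hlt : p < M := lt_of_le_of_ne hpM hne
    have hbotp : (⟨⊥, Ideal.bot_prime⟩ : PrimeSpectrum R) < ⟨p, hp⟩ := aux_bot_lt hp0
    have hltp : (⟨p, hp⟩ : PrimeSpectrum R) < ⟨M, hM.isPrime⟩ := by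
      rw [← PrimeSpectrum.asIdeal_lt_asIdeal]; exact hlt
    let c1 : LTSeries (PrimeSpectrum R) :=
      (RelSeries.singleton _ (⟨M, hM.isPrime⟩ : PrimeSpectrum R)).cons ⟨p, hp⟩ (by simpa)
    let c : LTSeries (PrimeSpectrum R) :=
      c1.cons ⟨⊥, Ideal.bot_prime⟩ (by simpa [c1])
    have hlen := Order.LTSeries.length_le_krullDim c
    have hc : c.length = 2 := by simp [c, c1]
    rw [hc] at hlen
    rw [show ringKrullDim R = Order.krullDim (PrimeSpectrum R) from rfl] at hdim
    rw [hdim] at hlen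
    norm_num at hlen
  rw [hpM']
  exact hM

lemma aux_nat_isUnit {R : Type*} [CommRing R]
    (hfield : ∃ K : Subring R, IsField K ∧ CharZero K) {k : ℕ} (hk : k ≠ 0) :
    IsUnit (k : R) := by
  obtain ⟨K₀, hf, hc⟩ := hfield
  have hkK : (k : K₀) ≠ 0 := Nat.cast_ne_zero.mpr hk
  obtain ⟨z, hz⟩ := hf.mul_inv_cancel hkK
  refine IsUnit.of_mul_eq_one (z : R) ?_
  have h2 : (((k : K₀) * z : K₀) : R) = ((1 : K₀) : R) := congrArg _ hz
  push_cast at h2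
  exact h2

theorem aux_IC {R : Type*} [CommRing R] [IsDomain R]
    (hfield : ∃ K : Subring R, IsField K ∧ CharZero K)
    (hSTCI : ∀ P : Ideal R[X], P.IsPrime → IsSTCI P) :
    IsIntegrallyClosed R := by
  set K := FractionRing R with hKdef
  rw [isIntegrallyClosed_iff K]
  intro x hx
  have hinj : Function.Injective (algebraMap R K) := IsFractionRing.injective R K
  set Q : Ideal R[X] := RingHom.ker (aeval x : R[X] →ₐ[R] K) with hQdef
  have hQp : Q.IsPrime := RingHom.ker_isPrime _
  have hmemQ : ∀ g : R[X], g ∈ Q ↔ aeval x g = 0 := fun g => RingHom.mem_ker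
  obtain ⟨⟨s, d⟩, hd⟩ := IsLocalization.surj (nonZeroDivisors R) x
  simp only at hd
  have hd0 : (d : R) ≠ 0 := nonZeroDivisors.ne_zero d.2
  set q0 : R[X] := C (d : R) * X - C s with hq0def
  have hq0Q : q0 ∈ Q := by
    rw [hmemQ]
    simp only [hq0def, map_sub, map_mul, aeval_C, aeval_X]
    rw [sub_eq_zero, mul_comm]
    exact hd
  have hq0ne : q0 ≠ 0 := by
    intro h
    apply hd0
    have := congrArg (fun p => Polynomial.coeff p 1) h
    simp only [hq0def, coeff_sub, coeff_C_mul, coeff_X_one, coeff_C, mul_one,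
      if_neg (one_ne_zero), sub_zero] at this
    exact this
  have hQbot : Q ≠ ⊥ := fun h => hq0ne (by rwa [h, Ideal.mem_bot] at hq0Q)
  have hQR : ∀ r : R, C r ∈ Q → r = 0 := by
    intro r hr
    rw [hmemQ, aeval_C] at hr
    exact (IsFractionRing.to_map_eq_zero_iff (K := K)).mp hr
  have hsx : algebraMap R K s = algebraMap R K (d : R) * x := by rw [← hd, mul_comm]
  have hmapq0 : q0.map (algebraMap R K) = C (algebraMap R K (d : R)) * (X - C x) := by
    rw [hq0def, Polynomial.map_sub, Polynomial.map_mul, map_C, map_C, map_X, hsx, C_mul,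
      mul_sub]
  have factor : ∀ g ∈ Q, ∃ (e : R) (h : R[X]), e ≠ 0 ∧ C e * g = q0 * h := by
    intro g hg
    have hroot : (g.map (algebraMap R K)).eval x = 0 := by
      rw [Polynomial.eval_map, ← aeval_def]
      exact (hmemQ g).mp hg
    obtain ⟨h', hh'⟩ := Polynomial.dvd_iff_isRoot.mpr hroot
    obtain ⟨e, he⟩ := IsLocalization.integerNormalization_map_to_map (nonZeroDivisors R) h'
    refine ⟨(d : R) * (e : R), IsLocalization.integerNormalization (nonZeroDivisors R) h',
      mul_ne_zero hd0 (nonZeroDivisors.ne_zero e.2), ?_⟩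
    apply Polynomial.map_injective (algebraMap R K) hinj
    have hsm : (e : R) • h' = C (algebraMap R K (e : R)) * h' := by
      rw [← algebraMap_smul K (e : R) h', Polynomial.smul_eq_C_mul]
    rw [Polynomial.map_mul, Polynomial.map_mul, map_C, he, hmapq0, hh', hsm, map_mul, C_mul]
    ring
  have hq0deg : q0.natDegree = 1 := by
    have h' : q0 = C (d : R) * X + C (-s) := by rw [hq0def, map_neg, sub_eq_add_neg]
    rw [h']
    exact natDegree_linear hd0
  have hmin : ∀ P : Ideal R[X], P.IsPrime → P < Q → P = ⊥ := by
    intro P hP hPQ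
    have hPR : ∀ r : R, C r ∈ P → r = 0 := fun r h => hQR r (hPQ.le h)
    by_contra hPbot
    obtain ⟨g, hgP, hg0⟩ := Submodule.exists_mem_ne_zero_of_ne_bot hPbot
    have hq0P : q0 ∈ P := by
      have main : ∀ n : ℕ, ∀ g : R[X], g ∈ P → g ≠ 0 → g.natDegree ≤ n → q0 ∈ P := by
        intro n
        induction n with
        | zero =>
          intro g hgP hg0 hdeg
          exfalso
          apply hg0
          have hg : g = C (g.coeff 0) := eq_C_of_natDegree_eq_zero (Nat.le_zero.mp hdeg)
          have hc0 : g.coeff 0 = 0 := hPR (g.coeff 0) (hg ▸ hgP)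
          rw [hg, hc0, map_zero]
        | succ n ih =>
          intro g hgP hg0 hdeg
          obtain ⟨e, h, he0, heq⟩ := factor g (hPQ.le hgP)
          have hmem : q0 * h ∈ P := by rw [← heq]; exact Ideal.mul_mem_left _ _ hgP
          rcases hP.mem_or_mem hmem with h1 | h2
          · exact h1
          · have hh0 : h ≠ 0 := by
              rintro rfl
              rw [mul_zero] at heq
              rcases mul_eq_zero.mp heq with hc | hc
              · exact he0 (by simpa using hc)
              · exact hg0 hc
            have hdegeq : g.natDegree = 1 + h.natDegree := by
              have h1' : (C e * g).natDegree = g.natDegree := natDegree_C_mul he0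
              have h2' : (q0 * h).natDegree = 1 + h.natDegree := by
                rw [natDegree_mul hq0ne hh0, hq0deg]
              rw [heq, h2'] at h1'
              omega
            exact ih h h2 hh0 (by omega)
      exact main g.natDegree g hgP hg0 le_rfl
    have hQP : Q ≤ P := by
      intro q hq
      obtain ⟨e, h, he0, heq⟩ := factor q hq
      have hmem : C e * q ∈ P := by rw [heq]; exact Ideal.mul_mem_right _ _ hq0P
      rcases hP.mem_or_mem hmem with h1 | h2
      · exact absurd (hPR _ h1) he0
      · exact h2
    exact absurd hQP hPQ.not_ge
  have hQh : idealHeight Q = 1 := aux_idealHeight_eq_one hQp hQbot hmin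
  obtain ⟨f, hfQ⟩ := aux_exists_radical_span_singleton hQp (hSTCI Q hQp) hQh
  have hfmem : f ∈ Q := by
    rw [hfQ]; exact Ideal.le_radical (Ideal.mem_span_singleton_self f)
  have hf0 : f ≠ 0 := by
    rintro rfl
    have h1 : q0 ∈ (Ideal.span {(0 : R[X])}).radical := hfQ ▸ hq0Q
    rw [Ideal.span_singleton_eq_bot.mpr rfl] at h1
    obtain ⟨n, hn⟩ := h1
    rw [Ideal.mem_bot] at hn
    rcases Nat.eq_zero_or_pos n with h | h
    · rw [h, pow_zero] at hn; exact one_ne_zero hn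
    · exact hq0ne ((pow_eq_zero_iff h.ne').mp hn)
  obtain ⟨pm, hmon, heval⟩ := hx
  have hpQ : pm ∈ Q := by rw [hmemQ, aeval_def]; exact heval
  have hpQ' : pm ∈ (Ideal.span {f}).radical := hfQ ▸ hpQ
  obtain ⟨N, hN⟩ := hpQ'
  obtain ⟨h, hh⟩ := Ideal.mem_span_singleton'.mp hN
  have hcunit : IsUnit f.leadingCoeff := by
    have hlc := congrArg Polynomial.leadingCoeff hh
    rw [Polynomial.leadingCoeff_mul, (hmon.pow N).leadingCoeff] at hlc
    exact IsUnit.of_mul_eq_one _ (by rw [mul_comm]; exact hlc)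
  set fK := f.map (algebraMap R K) with hfKdef
  have hfK0 : fK ≠ 0 := fun hc => hf0 ((Polynomial.map_eq_zero_iff hinj).mp hc)
  have hfactors : ∀ π : K[X], Irreducible π → π ∣ fK → (X - C x) ∣ π := by
    intro π hπ hdvd
    have hsp : (Ideal.span {π}).IsPrime :=
      (Ideal.span_singleton_prime hπ.ne_zero).mpr
        (UniqueFactorizationMonoid.irreducible_iff_prime.mp hπ)
    have hP'p : (Ideal.comap (Polynomial.mapRingHom (algebraMap R K))
        (Ideal.span {π})).IsPrime := hsp.comap _
    have hfP' : f ∈ Ideal.comap (Polynomial.mapRingHom (algebraMap R K)) (Ideal.span {π}) := by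
      rw [Ideal.mem_comap]
      exact Ideal.mem_span_singleton.mpr (by simpa using hdvd)
    have hQP' : Q ≤ Ideal.comap (Polynomial.mapRingHom (algebraMap R K)) (Ideal.span {π}) := by
      rw [hfQ]
      exact hP'p.radical_le_iff.mpr (Ideal.span_le.mpr (Set.singleton_subset_iff.mpr hfP'))
    have hq0P' := hQP' hq0Q
    rw [Ideal.mem_comap] at hq0P'
    have hdvd0 : π ∣ C (algebraMap R K (d : R)) * (X - C x) := by
      rw [← hmapq0]
      exact Ideal.mem_span_singleton.mp (by simpa using hq0P')
    rcases (UniqueFactorizationMonoid.irreducible_iff_prime.mp hπ).2.2 _ _ hdvd0 with h1 | h2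
    · exfalso
      refine hπ.not_isUnit (isUnit_of_dvd_unit h1 (Polynomial.isUnit_C.mpr ?_))
      exact isUnit_iff_ne_zero.mpr fun hz => hd0 ((IsFractionRing.to_map_eq_zero_iff (K := K)).mp hz)
    · exact ((hπ.associated_of_dvd (Polynomial.irreducible_X_sub_C x) h2).symm).dvd
  have pow_lemma : ∀ n : ℕ, ∀ g : K[X], g ≠ 0 → g.natDegree ≤ n →
      (∀ π : K[X], Irreducible π → π ∣ g → (X - C x) ∣ π) →
      ∃ (w : K) (k : ℕ), w ≠ 0 ∧ g = C w * (X - C x) ^ k := by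
    intro n
    induction n with
    | zero =>
      intro g hg0 hdeg _
      refine ⟨g.coeff 0, 0, ?_, ?_⟩
      · intro hc
        exact hg0 (by rw [eq_C_of_natDegree_eq_zero (Nat.le_zero.mp hdeg), hc, map_zero])
      · rw [pow_zero, mul_one]
        exact eq_C_of_natDegree_eq_zero (Nat.le_zero.mp hdeg)
    | succ n ih =>
      intro g hg0 hdeg hfac
      by_cases hu : IsUnit g
      · obtain ⟨r, hur, hCr⟩ := Polynomial.isUnit_iff.mp hu
        exact ⟨r, 0, hur.ne_zero, by rw [pow_zero, mul_one, hCr]⟩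
      · obtain ⟨π, hπ, hπdvd⟩ := WfDvdMonoid.exists_irreducible_factor hu hg0
        have hXdvd : (X - C x) ∣ g := (hfac π hπ hπdvd).trans hπdvd
        obtain ⟨g₁, rfl⟩ := hXdvd
        have hg₁0 : g₁ ≠ 0 := right_ne_zero_of_mul hg0
        have hdeg₁ : g₁.natDegree ≤ n := by
          have hcalc : ((X - C x) * g₁).natDegree = 1 + g₁.natDegree := by
            rw [natDegree_mul (X_sub_C_ne_zero x) hg₁0, natDegree_X_sub_C]
          omega
        obtain ⟨w, k, hw, hfact⟩ := ih g₁ hg₁0 hdeg₁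
          (fun π hπ' hdd => hfac π hπ' (hdd.mul_left _))
        exact ⟨w, k + 1, hw, by rw [hfact]; ring⟩
  obtain ⟨w, k, hw0, hfact⟩ := pow_lemma fK.natDegree fK hfK0 le_rfl hfactors
  have hfeval : fK.eval x = 0 := by
    rw [Polynomial.eval_map, ← aeval_def]
    exact (hmemQ f).mp hfmem
  have hk1 : 1 ≤ k := by
    by_contra hk
    have hk0 : k = 0 := by omega
    rw [hfact, hk0, pow_zero, mul_one, eval_C] at hfeval
    exact hw0 hfeval
  obtain ⟨k', rfl⟩ : ∃ k', k = k' + 1 := ⟨k - 1, by omega⟩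
  have hlcw : algebraMap R K f.leadingCoeff = w := by
    have h1 : fK.leadingCoeff = algebraMap R K f.leadingCoeff :=
      Polynomial.leadingCoeff_map_of_injective hinj f
    have h2 : fK.leadingCoeff = w := by
      rw [hfact, leadingCoeff_mul, leadingCoeff_C, ((monic_X_sub_C x).pow (k' + 1)).leadingCoeff,
        mul_one]
    rw [← h1, h2]
  have hcoeff : algebraMap R K (f.coeff k') = w * (-x * ((k' + 1 : ℕ) : K)) := by
    have h1 : fK.coeff k' = algebraMap R K (f.coeff k') := Polynomial.coeff_map _ _
    have hXC : (X - C x) = X + C (-x) := by rw [map_neg, sub_eq_add_neg]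
    have h2 : fK.coeff k' = w * ((-x) ^ ((k' + 1) - k') * (((k' + 1).choose k' : ℕ) : K)) := by
      rw [hfact, hXC, coeff_C_mul, coeff_X_add_C_pow]
    rw [Nat.succ_sub (le_refl k'), Nat.sub_self, pow_one, Nat.choose_succ_self_right] at h2
    rw [← h1, h2]
  have hkR : IsUnit ((k' + 1 : ℕ) : R) := aux_nat_isUnit hfield (Nat.succ_ne_zero k')
  refine ⟨-(((hcunit.unit⁻¹ : Rˣ) : R) * ((hkR.unit⁻¹ : Rˣ) : R) * f.coeff k'), ?_⟩
  have hu1 : algebraMap R K ((hcunit.unit⁻¹ : Rˣ) : R) * w = 1 := by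
    have hh1 : ((hcunit.unit⁻¹ : Rˣ) : R) * f.leadingCoeff = 1 := by
      calc ((hcunit.unit⁻¹ : Rˣ) : R) * f.leadingCoeff
          = ((hcunit.unit⁻¹ : Rˣ) : R) * ((hcunit.unit : Rˣ) : R) := by rw [hcunit.unit_spec]
        _ = 1 := Units.inv_mul _
    rw [← hlcw, ← map_mul, hh1, map_one]
  have hv1 : algebraMap R K ((hkR.unit⁻¹ : Rˣ) : R) * ((k' + 1 : ℕ) : K) = 1 := by
    have hh2 : ((hkR.unit⁻¹ : Rˣ) : R) * ((k' + 1 : ℕ) : R) = 1 := by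
      calc ((hkR.unit⁻¹ : Rˣ) : R) * ((k' + 1 : ℕ) : R)
          = ((hkR.unit⁻¹ : Rˣ) : R) * ((hkR.unit : Rˣ) : R) := by rw [hkR.unit_spec]
        _ = 1 := Units.inv_mul _
    rw [show ((k' + 1 : ℕ) : K) = algebraMap R K ((k' + 1 : ℕ) : R) from (map_natCast _ _).symm,
      ← map_mul, hh2, map_one]
  rw [map_neg, map_mul, map_mul, hcoeff]
  calc -(algebraMap R K ((hcunit.unit⁻¹ : Rˣ) : R) * algebraMap R K ((hkR.unit⁻¹ : Rˣ) : R) *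
      (w * (-x * ((k' + 1 : ℕ) : K))))
      = (algebraMap R K ((hcunit.unit⁻¹ : Rˣ) : R) * w) *
        (algebraMap R K ((hkR.unit⁻¹ : Rˣ) : R) * ((k' + 1 : ℕ) : K)) * x := by ring
  _ = x := by rw [hu1, hv1, one_mul, one_mul]

section Part2

variable {R : Type*} [CommRing R] [IsDomain R] [IsDedekindDomain R]

lemma aux_mul_eq_span {I : Ideal R} (hI : I ≠ ⊥) :
    ∃ (J : Ideal R) (d : R), d ≠ 0 ∧ I * J = Ideal.span {d} := by
  have hI' : (I : FractionalIdeal R⁰ (FractionRing R)) ≠ 0 := by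
    rwa [Ne, FractionalIdeal.coeIdeal_eq_zero]
  obtain ⟨a, aJ, ha0, hrep⟩ :=
    FractionalIdeal.exists_eq_spanSingleton_mul ((I : FractionalIdeal R⁰ (FractionRing R))⁻¹)
  refine ⟨aJ, a, ha0, ?_⟩
  apply FractionalIdeal.coeIdeal_injective (K := FractionRing R)
  show ((I * aJ : Ideal R) : FractionalIdeal R⁰ (FractionRing R)) =
    ((Ideal.span {a} : Ideal R) : FractionalIdeal R⁰ (FractionRing R))
  rw [FractionalIdeal.coeIdeal_mul, FractionalIdeal.coeIdeal_span_singleton]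
  have hane : algebraMap R (FractionRing R) a ≠ 0 :=
    fun h => ha0 ((IsFractionRing.to_map_eq_zero_iff (K := FractionRing R)).mp h)
  have haJ : (aJ : FractionalIdeal R⁰ (FractionRing R)) =
      FractionalIdeal.spanSingleton R⁰ (algebraMap R (FractionRing R) a) *
        (I : FractionalIdeal R⁰ (FractionRing R))⁻¹ := by
    rw [hrep, ← mul_assoc, FractionalIdeal.spanSingleton_mul_spanSingleton,
      mul_inv_cancel₀ hane, FractionalIdeal.spanSingleton_one, one_mul]
  rw [haJ, mul_comm, mul_assoc,
    mul_comm ((I : FractionalIdeal R⁰ (FractionRing R)))⁻¹ (I : FractionalIdeal R⁰ (FractionRing R)),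
    mul_inv_cancel₀ hI', mul_one]

lemma aux_pow_principal {M : Ideal R} (hM : M.IsPrime) (hM0 : M ≠ ⊥)
    (hSTCI : ∀ P : Ideal R[X], P.IsPrime → IsSTCI P) :
    ∃ (i : ℕ) (r : R), 0 < i ∧ M ^ i = Ideal.span {r} := by
  set K := FractionRing R with hKdef
  set N := Ideal.map (C : R →+* R[X]) M with hNdef
  have hNp : N.IsPrime := by haveI := hM; exact Ideal.isPrime_map_C_of_isPrime
  obtain ⟨m, hmM, hm0⟩ := Submodule.exists_mem_ne_zero_of_ne_bot hM0
  have hCmN : C m ∈ N := Ideal.mem_map_of_mem _ hmM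
  have hCm0 : C m ≠ (0 : R[X]) := fun h => hm0 (Polynomial.C_eq_zero.mp h)
  have hN0 : N ≠ ⊥ := fun h => hCm0 (by rwa [h, Ideal.mem_bot] at hCmN)
  -- primes strictly below N are ⊥
  have hmin : ∀ P : Ideal R[X], P.IsPrime → P < N → P = ⊥ := by
    intro P hP hPN
    have hcomap_le : Ideal.comap (C : R →+* R[X]) P ≤ M := by
      intro r hr
      have hCr : C r ∈ N := hPN.le hr
      simpa using Ideal.mem_map_C_iff.mp hCr 0
    by_cases hbot : Ideal.comap (C : R →+* R[X]) P = ⊥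
    · by_contra hPbot
      obtain ⟨g, hgP, hg0⟩ := Submodule.exists_mem_ne_zero_of_ne_bot hPbot
      set I : Ideal R := Ideal.span (Set.range g.coeff) with hIdef
      have hIM : I ≤ M := Ideal.span_le.mpr (by
        rintro _ ⟨n, rfl⟩
        exact Ideal.mem_map_C_iff.mp (hPN.le hgP) n)
      have hI0 : I ≠ ⊥ := by
        intro hI
        apply hg0
        ext n
        have : g.coeff n = 0 :=
          (Submodule.mem_bot R).mp (hI ▸ Ideal.subset_span (Set.mem_range_self n))
        simp [this]
      obtain ⟨J, d, hd0, hIJ⟩ := aux_mul_eq_span hI0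
      have hexists : ¬ ∀ j ∈ J, ∀ n : ℕ, j * g.coeff n ∈ Ideal.span {d} * M := by
        intro hall
        have hle : I * J ≤ Ideal.span {d} * M := by
          rw [hIdef, ← Ideal.span_eq J, Ideal.span_mul_span']
          refine Ideal.span_le.mpr ?_
          rintro z hz
          rw [Set.mem_mul] at hz
          obtain ⟨u, hu, t, ht, rfl⟩ := hz
          obtain ⟨n, rfl⟩ := hu
          exact mul_comm (g.coeff n) t ▸ hall t ht n
        rw [hIJ] at hle
        have hdmem : d ∈ Ideal.span {d} * M := hle (Ideal.mem_span_singleton_self d)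
        obtain ⟨z, hz, hdz⟩ := Ideal.mem_span_singleton_mul.mp hdmem
        have hz1 : z = 1 := by
          apply mul_left_cancel₀ hd0
          rw [hdz, mul_one]
        exact hM.ne_top ((Ideal.eq_top_iff_one M).mpr (hz1 ▸ hz))
      push_neg at hexists
      obtain ⟨j, hjJ, n, hbad⟩ := hexists
      have hjg : ∀ t : ℕ, d ∣ j * g.coeff t := by
        intro t
        have hmm : g.coeff t * j ∈ I * J :=
          Ideal.mul_mem_mul (Ideal.subset_span (Set.mem_range_self t)) hjJ
        rw [hIJ] at hmm
        rw [mul_comm]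
        exact Ideal.mem_span_singleton.mp hmm
      have hdvd : C d ∣ C j * g :=
        (Polynomial.C_dvd_iff_dvd_coeff _ _).mpr (fun t => by
          simpa [coeff_C_mul] using hjg t)
      obtain ⟨g', hg'⟩ := hdvd
      have hg'P : g' ∈ P := by
        have hmem : C d * g' ∈ P := by rw [← hg']; exact Ideal.mul_mem_left _ (C j) hgP
        rcases hP.mem_or_mem hmem with h1 | h2
        · exfalso
          apply hd0
          have : d ∈ Ideal.comap (C : R →+* R[X]) P := h1
          rwa [hbot, Ideal.mem_bot] at this
        · exact h2
      have hg'M : g'.coeff n ∈ M := Ideal.mem_map_C_iff.mp (hPN.le hg'P) n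
      apply hbad
      have hjn : j * g.coeff n = d * g'.coeff n := by
        have := congrArg (fun q => Polynomial.coeff q n) hg'
        simpa [coeff_C_mul] using this
      rw [hjn]
      exact Ideal.mul_mem_mul (Ideal.mem_span_singleton_self d) hg'M
    · exfalso
      have hcp : (Ideal.comap (C : R →+* R[X]) P).IsPrime := hP.comap _
      have hmax := hcp.isMaximal hbot
      have hceq : Ideal.comap (C : R →+* R[X]) P = M := hmax.eq_of_le hM.ne_top hcomap_le
      have hNP : N ≤ P := Ideal.map_le_iff_le_comap.mpr hceq.ge
      exact hPN.not_ge hNP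
  have hNh : idealHeight N = 1 := aux_idealHeight_eq_one hNp hN0 hmin
  obtain ⟨f, hfN⟩ := aux_exists_radical_span_singleton hNp (hSTCI N hNp) hNh
  have hf0 : f ≠ 0 := by
    rintro rfl
    have h1 : C m ∈ (Ideal.span {(0 : R[X])}).radical := hfN ▸ hCmN
    rw [Ideal.span_singleton_eq_bot.mpr rfl] at h1
    obtain ⟨n, hn⟩ := h1
    rw [Ideal.mem_bot] at hn
    rcases Nat.eq_zero_or_pos n with h | h
    · rw [h, pow_zero] at hn; exact one_ne_zero hn
    · exact hCm0 ((pow_eq_zero_iff h.ne').mp hn)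
  have hinj : Function.Injective (algebraMap R K) := IsFractionRing.injective R K
  set fK := f.map (algebraMap R K) with hfKdef
  have hfK0 : fK ≠ 0 := fun hc => hf0 ((Polynomial.map_eq_zero_iff hinj).mp hc)
  have hfKunit : IsUnit fK := by
    by_contra hu
    obtain ⟨π, hπ, hπdvd⟩ := WfDvdMonoid.exists_irreducible_factor hu hfK0
    have hsp : (Ideal.span {π}).IsPrime :=
      (Ideal.span_singleton_prime hπ.ne_zero).mpr
        (UniqueFactorizationMonoid.irreducible_iff_prime.mp hπ)
    have hP'p : (Ideal.comap (Polynomial.mapRingHom (algebraMap R K))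
        (Ideal.span {π})).IsPrime := hsp.comap _
    have hfP' : f ∈ Ideal.comap (Polynomial.mapRingHom (algebraMap R K)) (Ideal.span {π}) := by
      rw [Ideal.mem_comap]
      exact Ideal.mem_span_singleton.mpr (by simpa using hπdvd)
    have hNP' : N ≤ Ideal.comap (Polynomial.mapRingHom (algebraMap R K)) (Ideal.span {π}) := by
      rw [hfN]
      exact hP'p.radical_le_iff.mpr (Ideal.span_le.mpr (Set.singleton_subset_iff.mpr hfP'))
    have hmem := hNP' hCmN
    rw [Ideal.mem_comap] at hmem
    have hdvdC : π ∣ C (algebraMap R K m) := by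
      have := Ideal.mem_span_singleton.mp (by simpa using hmem)
      simpa using this
    have hCunit : IsUnit (C (algebraMap R K m) : K[X]) :=
      Polynomial.isUnit_C.mpr (isUnit_iff_ne_zero.mpr
        (fun h => hm0 ((IsFractionRing.to_map_eq_zero_iff (K := K)).mp h)))
    exact hπ.not_isUnit (isUnit_of_dvd_unit hdvdC hCunit)
  have hdeg0 : f.natDegree = 0 := by
    obtain ⟨r', hur, hCr⟩ := Polynomial.isUnit_iff.mp hfKunit
    have hdK : fK.natDegree = 0 := by rw [← hCr]; exact natDegree_C r'
    rwa [hfKdef, natDegree_map_eq_of_injective hinj] at hdK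
  set r := f.coeff 0 with hrdef
  have hfC : f = C r := eq_C_of_natDegree_eq_zero hdeg0
  have hr0 : r ≠ 0 := fun h => hf0 (by rw [hfC, h, map_zero])
  have hrad : (Ideal.span {r} : Ideal R).radical = M := by
    apply le_antisymm
    · intro z hz
      obtain ⟨t, ht⟩ := hz
      obtain ⟨u, hu⟩ := Ideal.mem_span_singleton.mp ht
      have hCz : C z ∈ N := by
        rw [hfN]
        refine ⟨t, Ideal.mem_span_singleton.mpr ⟨C u, ?_⟩⟩
        rw [← C_pow, hu, C_mul, hfC]
      simpa using Ideal.mem_map_C_iff.mp hCz 0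
    · intro m' hm'
      have hCm' : C m' ∈ N := Ideal.mem_map_of_mem _ hm'
      rw [hfN] at hCm'
      obtain ⟨t, ht⟩ := hCm'
      obtain ⟨h, hh⟩ := Ideal.mem_span_singleton'.mp ht
      refine ⟨t, Ideal.mem_span_singleton.mpr ⟨h.coeff 0, ?_⟩⟩
      have := congrArg (fun q => Polynomial.coeff q 0) hh
      simp only [← C_pow, hfC, Polynomial.mul_coeff_zero, coeff_C_zero] at this
      rw [← this, mul_comm]
  obtain ⟨t, ht⟩ := Ideal.exists_radical_pow_le_of_fg (Ideal.span {r} : Ideal R)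
    (IsNoetherian.noetherian _)
  rw [hrad] at ht
  have hle : Ideal.span {r} ≤ M := hrad ▸ Ideal.le_radical
  have hdvd1 : Ideal.span {r} ∣ M ^ t := Ideal.dvd_iff_le.mpr ht
  obtain ⟨i, hit, hassoc⟩ := (dvd_prime_pow (Ideal.prime_of_isPrime hM0 hM) t).mp hdvd1
  have heq : Ideal.span {r} = M ^ i := associated_iff_eq.mp hassoc
  have hi1 : 0 < i := by
    rcases Nat.eq_zero_or_pos i with h0 | h
    · exfalso
      rw [h0, pow_zero, Ideal.one_eq_top] at heq
      exact hM.ne_top (top_le_iff.mp (heq ▸ hle))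
    · exact h
  exact ⟨i, r, hi1, heq.symm⟩

lemma aux_torsion (hSTCI : ∀ P : Ideal R[X], P.IsPrime → IsSTCI P) :
    ∀ c : ClassGroup R, ∃ n : ℕ, 0 < n ∧ c ^ n = 1 := by
  have key : ∀ I : Ideal R, ∀ hI : I ∈ (Ideal R)⁰,
      ∃ n : ℕ, 0 < n ∧ (ClassGroup.mk0 ⟨I, hI⟩) ^ n = 1 := by
    intro I
    induction I using UniqueFactorizationMonoid.induction_on_prime with
    | h₁ =>
      intro hI
      exact absurd rfl (mem_nonZeroDivisors_iff_ne_zero.mp hI)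
    | h₂ =>
      rename_i x hx
      intro hI
      refine ⟨1, one_pos, ?_⟩
      rw [pow_one]
      refine (ClassGroup.mk0_eq_one_iff hI).mpr ?_
      rw [Ideal.isUnit_iff.mp hx]
      exact ⟨⟨1, Ideal.span_singleton_one.symm⟩⟩
    | h₃ =>
      rename_i a p ha hp ih
      intro hI
      have hpmem : p ∈ (Ideal R)⁰ := mem_nonZeroDivisors_iff_ne_zero.mpr hp.ne_zero
      have hamem : a ∈ (Ideal R)⁰ := mem_nonZeroDivisors_iff_ne_zero.mpr ha
      obtain ⟨n₁, hn₁, h1⟩ := ih hamem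
      obtain ⟨i, r, hi, heq⟩ := aux_pow_principal (Ideal.isPrime_of_prime hp) hp.ne_zero hSTCI
      have h2 : (ClassGroup.mk0 ⟨p, hpmem⟩) ^ i = 1 := by
        rw [← map_pow]
        have hppow : (⟨p, hpmem⟩ : (Ideal R)⁰) ^ i = ⟨p ^ i, pow_mem hpmem i⟩ := by
          ext
          simp
        rw [hppow]
        exact (ClassGroup.mk0_eq_one_iff _).mpr ⟨⟨r, heq⟩⟩
      refine ⟨i * n₁, Nat.mul_pos hi hn₁, ?_⟩
      have hsplit : (⟨p * a, hI⟩ : (Ideal R)⁰) = ⟨p, hpmem⟩ * ⟨a, hamem⟩ := rfl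
      rw [hsplit, map_mul, mul_pow, pow_mul, h2, one_pow, one_mul, mul_comm i n₁, pow_mul, h1,
        one_pow]
  intro c
  obtain ⟨⟨I, hI⟩, rfl⟩ := ClassGroup.mk0_surjective c
  exact key I hI

end Part2

/-- A Noetherian domain of Krull dimension one containing a field of characteristic zero,
all of whose primes of `R[X]` are set theoretic complete intersections, is a Dedekind
domain with torsion ideal class group. -/
theorem stmt_0 (R : Type*) [CommRing R] [IsDomain R] [IsNoetherianRing R]
    (hdim : ringKrullDim R = 1)
    (hfield : ∃ K : Subring R, IsField K ∧ CharZero K)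
    (hSTCI : ∀ P : Ideal R[X], P.IsPrime → IsSTCI P) :
    IsDedekindDomain R ∧ ∀ c : ClassGroup R, ∃ n : ℕ, 0 < n ∧ c ^ n = 1 := by
  haveI hd1 : Ring.DimensionLEOne R := aux_dimLEOne hdim
  haveI hic : IsIntegrallyClosed R := aux_IC hfield hSTCI
  haveI hdr : IsDedekindRing R := { }
  haveI hded : IsDedekindDomain R := inferInstance
  exact ⟨hded, aux_torsion hSTCI⟩
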